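/- Let X be finite and u : Set X → ℝ supermodular. For each A ⊆ X let f(A) be the unique inclusion-minimal maximizer of u among subsets of A. Then f is monotone: A ⊆ B implies f(A) ⊆ f(B) (and hence f is a complementary choice function). -/
import Mathlib

theorem stmt_14 {X : Type*} [Fintype X] (u : Set X → ℝ)
    (hsuper : ∀ A B : Set X, u A + u B ≤ u (A ∩ B) + u (A ∪ B))
    (f : Set X → Set X)
    (hsub : ∀ A : Set X, f A ⊆ A)
    (hmax : ∀ A : Set X, ∀ C ⊆ A, u C ≤ u (f A))
    (hminimal : ∀ A : Set X, ∀ C ⊆ A, (∀ D ⊆ A, u D ≤ u C) → f A ⊆ C) :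
    ∀ A B : Set X, A ⊆ B → f A ⊆ f B := by
  intro A B hAB
  have hIA : f A ∩ f B ⊆ A := fun x hx => hsub A hx.1
  have hUB : f A ∪ f B ⊆ B := Set.union_subset ((hsub A).trans hAB) (hsub B)
  have h1 : u (f A) ≤ u (f A ∩ f B) := by
    have := hsuper (f A) (f B)
    have h2 : u (f A ∪ f B) ≤ u (f B) := hmax B _ hUB
    linarith
  have key : f A ⊆ f A ∩ f B := hminimal A _ hIA
    (fun D hD => (hmax A D hD).trans h1)
  exact key.trans Set.inter_subset_right
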